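/- For every integer n ≥ 1, the zigzag snake graph Z_n has exactly n+1 perfect matchings. -/

import Mathlib

namespace Zigzag

/-- `cpt i` is the distinguished corner `c_i` of the `i`-th tile (for `1 ≤ i`):
`c_1 = (0,0)` and, for `1 ≤ i`, `c_{i+1} = c_i + (0,1)` if `i` is odd and
`c_{i+1} = c_i + (1,0)` if `i` is even. -/
def cpt : ℕ → ℤ × ℤ
  | 0 => (0, 0)
  | 1 => (0, 0)
  | i + 2 => cpt (i + 1) + (if (i + 1) % 2 = 1 then ((0 : ℤ), (1 : ℤ)) else ((1 : ℤ), (0 : ℤ)))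

/-- The `i`-th tile: the four lattice points `{c_i, c_i+(1,0), c_i+(0,1), c_i+(1,1)}`. -/
def tile (i : ℕ) : Set (ℤ × ℤ) :=
  {cpt i, cpt i + (1, 0), cpt i + (0, 1), cpt i + (1, 1)}

/-- The vertex set of the zigzag snake graph `Z n`: the union of the `n` tiles. -/
def Vset (n : ℕ) : Set (ℤ × ℤ) := ⋃ i ∈ Set.Icc 1 n, tile i

/-- The zigzag snake graph `Z n`: two lattice points are adjacent exactly when they lie at
Euclidean distance 1 from each other and both belong to a common tile. -/
def Zgraph (n : ℕ) : SimpleGraph (ℤ × ℤ) where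
  Adj a b := ((a.1 - b.1) ^ 2 + (a.2 - b.2) ^ 2 = 1) ∧
    ∃ i : ℕ, 1 ≤ i ∧ i ≤ n ∧ a ∈ tile i ∧ b ∈ tile i
  symm := by
    constructor
    rintro a b ⟨hd, i, hi1, hi2, ha, hb⟩
    exact ⟨by linear_combination hd, i, hi1, hi2, hb, ha⟩
  loopless := by
    constructor
    rintro a ⟨hd, -⟩
    simp at hd

/-- A perfect matching of `Z n`: a set of edges of `Z n` such that every vertex of `Z n`
belongs to exactly one edge of the set. -/
def IsPerfectMatching (n : ℕ) (M : Set (Sym2 (ℤ × ℤ))) : Prop :=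
  M ⊆ (Zgraph n).edgeSet ∧ ∀ v ∈ Vset n, ∃! e, e ∈ M ∧ v ∈ e

end Zigzag

namespace Zigzag

def A (i : ℕ) : ℤ × ℤ := (((i:ℤ)-1)/2, (i:ℤ)/2)

def B (i : ℕ) : ℤ × ℤ :=
  (((i:ℤ)-1)/2 + (if i % 2 = 1 then 1 else 0), (i:ℤ)/2 + (if i % 2 = 1 then 0 else 1))

@[simp] lemma A_inj {i j : ℕ} : A i = A j ↔ i = j := by
  unfold A; rw [Prod.mk.injEq]; constructor
  · rintro ⟨h1, h2⟩; omega
  · rintro rfl; exact ⟨rfl, rfl⟩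

@[simp] lemma B_inj {i j : ℕ} : B i = B j ↔ i = j := by
  unfold B; rw [Prod.mk.injEq]; constructor
  · rintro ⟨h1, h2⟩; split_ifs at h1 h2 <;> omega
  · rintro rfl; exact ⟨rfl, rfl⟩

@[simp] lemma A_ne_B (i j : ℕ) : A i ≠ B j := by
  unfold A B; rw [Ne, Prod.mk.injEq]; rintro ⟨h1, h2⟩; split_ifs at h1 h2 <;> omega

@[simp] lemma B_ne_A (i j : ℕ) : B i ≠ A j := (A_ne_B j i).symm

lemma cpt_eq (i : ℕ) (h : 1 ≤ i) : cpt i = A i := by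
  induction i with
  | zero => omega
  | succ k ih =>
    rcases Nat.eq_or_lt_of_le h with h1 | h1
    · have : k = 0 := by omega
      subst this; unfold cpt A; norm_num
    · have hk : 1 ≤ k := by omega
      obtain ⟨m, rfl⟩ : ∃ m, k = m + 1 := ⟨k - 1, by omega⟩
      show cpt (m + 2) = A (m + 2)
      unfold cpt
      rw [ih (by omega)]
      unfold A
      split_ifs with hp
      · rw [Prod.mk_add_mk, Prod.mk.injEq]; constructor <;> [skip; skip] <;> push_cast <;> omega
      · rw [Prod.mk_add_mk, Prod.mk.injEq]; constructor <;> [skip; skip] <;> push_cast <;> omega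

lemma tile_pts (i : ℕ) (h : 1 ≤ i) :
    cpt i = A i ∧ cpt i + (1,1) = A (i+2) ∧
      ((cpt i + (1,0) = B i ∧ cpt i + (0,1) = A (i+1)) ∨
       (cpt i + (1,0) = A (i+1) ∧ cpt i + (0,1) = B i)) := by
  rw [cpt_eq i h]
  refine ⟨rfl, ?_, ?_⟩
  · unfold A; rw [Prod.mk_add_mk, Prod.mk.injEq]; constructor <;> push_cast <;> omega
  · rcases Nat.mod_two_eq_zero_or_one i with hp | hp
    · right
      have hp : ¬ (i % 2 = 1) := by omega
      unfold A B; simp only [hp, if_false]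
      constructor <;> (rw [Prod.mk_add_mk, Prod.mk.injEq]; constructor <;> push_cast <;> omega)
    · left
      unfold A B; simp only [hp, if_true]
      constructor <;> (rw [Prod.mk_add_mk, Prod.mk.injEq]; constructor <;> push_cast <;> omega)

def el (i : ℕ) : Sym2 (ℤ×ℤ) := s(A i, B i)
def et (i : ℕ) : Sym2 (ℤ×ℤ) := s(B i, A (i+2))
def ep (i : ℕ) : Sym2 (ℤ×ℤ) := s(A i, A (i+1))

lemma A_two (i : ℕ) : A (i+2) = A i + (1,1) := by
  unfold A; rw [Prod.mk_add_mk, Prod.mk.injEq]; constructor <;> push_cast <;> omega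

lemma AB_diag (i : ℕ) : B i = A (i+1) + (1,-1) ∨ A (i+1) = B i + (1,-1) := by
  rcases Nat.mod_two_eq_zero_or_one i with hp | hp
  · right
    have hp' : ¬ (i % 2 = 1) := by omega
    unfold A B; simp only [hp', if_false]
    rw [Prod.mk_add_mk, Prod.mk.injEq]; constructor <;> push_cast <;> omega
  · left
    unfold A B; simp only [hp, if_true]
    rw [Prod.mk_add_mk, Prod.mk.injEq]; constructor <;> push_cast <;> omega

lemma unit_diff_B (i : ℕ) : B i = A i + (1,0) ∨ B i = A i + (0,1) := by
  rcases Nat.mod_two_eq_zero_or_one i with hp | hp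
  · right
    have hp' : ¬ (i % 2 = 1) := by omega
    unfold A B; simp only [hp', if_false]
    rw [Prod.mk_add_mk, Prod.mk.injEq]; constructor <;> omega
  · left
    unfold A B; simp only [hp, if_true]
    rw [Prod.mk_add_mk, Prod.mk.injEq]; constructor <;> omega

lemma unit_diff_A (i : ℕ) : A (i+1) = A i + (1,0) ∨ A (i+1) = A i + (0,1) := by
  rcases Nat.mod_two_eq_zero_or_one i with hp | hp
  · left
    unfold A; rw [Prod.mk_add_mk, Prod.mk.injEq]
    constructor <;> push_cast <;> omega
  · right
    unfold A; rw [Prod.mk_add_mk, Prod.mk.injEq]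
    constructor <;> push_cast <;> omega

lemma unit_diff_T (i : ℕ) : A (i+2) = B i + (1,0) ∨ A (i+2) = B i + (0,1) := by
  rcases Nat.mod_two_eq_zero_or_one i with hp | hp
  · left
    have hp' : ¬ (i % 2 = 1) := by omega
    unfold A B; simp only [hp', if_false]
    rw [Prod.mk_add_mk, Prod.mk.injEq]; constructor <;> push_cast <;> omega
  · right
    unfold A B; simp only [hp, if_true]
    rw [Prod.mk_add_mk, Prod.mk.injEq]; constructor <;> push_cast <;> omega

lemma dist_unit {a b : ℤ×ℤ} (h : b = a + (1,0) ∨ b = a + (0,1)) :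
    (a.1 - b.1) ^ 2 + (a.2 - b.2) ^ 2 = 1 := by
  rcases h with rfl | rfl <;> simp [Prod.fst_add, Prod.snd_add] <;> ring

lemma not_dist' {a b : ℤ×ℤ} (h : b = a + (1,1) ∨ b = a + (1,-1)) :
    ¬ ((a.1 - b.1) ^ 2 + (a.2 - b.2) ^ 2 = 1) := by
  rcases h with rfl | rfl <;> simp [Prod.fst_add, Prod.snd_add] <;> ring_nf <;> norm_num

lemma dist_swap (a b : ℤ×ℤ) :
    (a.1 - b.1) ^ 2 + (a.2 - b.2) ^ 2 = (b.1 - a.1) ^ 2 + (b.2 - a.2) ^ 2 := by ring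

lemma not_dist_diag (i : ℕ) :
    ¬ (((B i).1 - (A (i+1)).1) ^ 2 + ((B i).2 - (A (i+1)).2) ^ 2 = 1) := by
  rcases AB_diag i with h | h
  · rw [h]; rw [dist_swap]; exact not_dist' (Or.inr rfl)
  · rw [h]; exact not_dist' (Or.inr rfl)

lemma mem_tile_iff (i : ℕ) (h : 1 ≤ i) (x : ℤ×ℤ) :
    x ∈ tile i ↔ x = A i ∨ x = B i ∨ x = A (i+1) ∨ x = A (i+2) := by
  obtain ⟨h0, h2, hc⟩ := tile_pts i h
  unfold tile
  simp only [Set.mem_insert_iff, Set.mem_singleton_iff]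
  rcases hc with ⟨ha, hb⟩ | ⟨ha, hb⟩ <;> rw [h2, ha, hb, h0] <;> tauto

lemma A_mem_Vset {n i : ℕ} (hn : 1 ≤ n) (h1 : 1 ≤ i) (h2 : i ≤ n + 2) : A i ∈ Vset n := by
  unfold Vset
  simp only [Set.mem_iUnion, Set.mem_Icc, exists_prop]
  rcases le_or_gt i n with h | h
  · exact ⟨i, ⟨h1, h⟩, (mem_tile_iff i h1 _).mpr (Or.inl rfl)⟩
  · have : i = n + 1 ∨ i = n + 2 := by omega
    rcases this with rfl | rfl
    · exact ⟨n, ⟨hn, le_rfl⟩, (mem_tile_iff n hn _).mpr (Or.inr (Or.inr (Or.inl rfl)))⟩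
    · exact ⟨n, ⟨hn, le_rfl⟩, (mem_tile_iff n hn _).mpr (Or.inr (Or.inr (Or.inr rfl)))⟩

lemma B_mem_Vset {n i : ℕ} (h1 : 1 ≤ i) (h2 : i ≤ n) : B i ∈ Vset n := by
  unfold Vset
  simp only [Set.mem_iUnion, Set.mem_Icc, exists_prop]
  exact ⟨i, ⟨h1, h2⟩, (mem_tile_iff i h1 _).mpr (Or.inr (Or.inl rfl))⟩

lemma mem_Vset {n : ℕ} {v : ℤ×ℤ} (hv : v ∈ Vset n) :
    (∃ i, 1 ≤ i ∧ i ≤ n + 2 ∧ v = A i) ∨ ∃ i, 1 ≤ i ∧ i ≤ n ∧ v = B i := by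
  unfold Vset at hv
  simp only [Set.mem_iUnion, Set.mem_Icc, exists_prop] at hv
  obtain ⟨i, ⟨hi1, hi2⟩, hvt⟩ := hv
  rw [mem_tile_iff i hi1] at hvt
  rcases hvt with rfl | rfl | rfl | rfl
  · exact Or.inl ⟨i, hi1, by omega, rfl⟩
  · exact Or.inr ⟨i, hi1, hi2, rfl⟩
  · exact Or.inl ⟨i+1, by omega, by omega, rfl⟩
  · exact Or.inl ⟨i+2, by omega, by omega, rfl⟩

lemma edge_shape {n : ℕ} {e : Sym2 (ℤ×ℤ)} (he : e ∈ (Zgraph n).edgeSet) :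
    (∃ k, 1 ≤ k ∧ k ≤ n ∧ e = el k) ∨ (∃ k, 1 ≤ k ∧ k ≤ n ∧ e = et k) ∨
    (∃ k, 1 ≤ k ∧ k ≤ n + 1 ∧ e = ep k) := by
  induction e using Sym2.ind with
  | _ x y =>
    rw [SimpleGraph.mem_edgeSet] at he
    obtain ⟨hd, i, hi1, hi2, hx, hy⟩ := he
    rw [mem_tile_iff i hi1] at hx hy
    rcases hx with rfl | rfl | rfl | rfl <;> rcases hy with rfl | rfl | rfl | rfl
    · simp at hd
    · exact Or.inl ⟨i, hi1, hi2, rfl⟩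
    · exact Or.inr (Or.inr ⟨i, hi1, by omega, rfl⟩)
    · rw [A_two i] at hd; exact absurd hd (not_dist' (Or.inl rfl))
    · exact Or.inl ⟨i, hi1, hi2, by unfold el; exact Sym2.eq_swap⟩
    · simp at hd
    · exact absurd hd (not_dist_diag i)
    · exact Or.inr (Or.inl ⟨i, hi1, hi2, rfl⟩)
    · exact Or.inr (Or.inr ⟨i, hi1, by omega, by unfold ep; exact Sym2.eq_swap⟩)
    · rw [dist_swap] at hd; exact absurd hd (not_dist_diag i)
    · simp at hd
    · exact Or.inr (Or.inr ⟨i+1, by omega, by omega, rfl⟩)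
    · rw [dist_swap, A_two i] at hd; exact absurd hd (not_dist' (Or.inl rfl))
    · exact Or.inr (Or.inl ⟨i, hi1, hi2, by unfold et; exact Sym2.eq_swap⟩)
    · exact Or.inr (Or.inr ⟨i+1, by omega, by omega, by unfold ep; exact Sym2.eq_swap⟩)
    · simp at hd


def Mset (n j : ℕ) : Set (Sym2 (ℤ×ℤ)) :=
  {e | (∃ k, 1 ≤ k ∧ k ≤ j ∧ e = el k) ∨ e = ep (j+1) ∨ (∃ k, j+1 ≤ k ∧ k ≤ n ∧ e = et k)}

lemma el_mem_edgeSet {n k : ℕ} (h1 : 1 ≤ k) (h2 : k ≤ n) : el k ∈ (Zgraph n).edgeSet := by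
  unfold el; rw [SimpleGraph.mem_edgeSet]
  exact ⟨dist_unit (unit_diff_B k), k, h1, h2,
    (mem_tile_iff k h1 _).mpr (Or.inl rfl), (mem_tile_iff k h1 _).mpr (Or.inr (Or.inl rfl))⟩

lemma et_mem_edgeSet {n k : ℕ} (h1 : 1 ≤ k) (h2 : k ≤ n) : et k ∈ (Zgraph n).edgeSet := by
  unfold et; rw [SimpleGraph.mem_edgeSet]
  exact ⟨dist_unit (unit_diff_T k), k, h1, h2,
    (mem_tile_iff k h1 _).mpr (Or.inr (Or.inl rfl)),
    (mem_tile_iff k h1 _).mpr (Or.inr (Or.inr (Or.inr rfl)))⟩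

lemma ep_mem_edgeSet {n k : ℕ} (hn : 1 ≤ n) (h1 : 1 ≤ k) (h2 : k ≤ n + 1) :
    ep k ∈ (Zgraph n).edgeSet := by
  unfold ep; rw [SimpleGraph.mem_edgeSet]
  refine ⟨dist_unit (unit_diff_A k), ?_⟩
  rcases le_or_gt k n with h | h
  · exact ⟨k, h1, h, (mem_tile_iff k h1 _).mpr (Or.inl rfl),
      (mem_tile_iff k h1 _).mpr (Or.inr (Or.inr (Or.inl rfl)))⟩
  · have hk : k = n + 1 := by omega
    subst hk
    exact ⟨n, hn, le_rfl, (mem_tile_iff n hn _).mpr (Or.inr (Or.inr (Or.inl rfl))),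
      (mem_tile_iff n hn _).mpr (Or.inr (Or.inr (Or.inr rfl)))⟩

lemma Mset_isPM {n j : ℕ} (hn : 1 ≤ n) (hj : j ≤ n) : IsPerfectMatching n (Mset n j) := by
  constructor
  · rintro e (⟨k, hk1, hk2, rfl⟩ | rfl | ⟨k, hk1, hk2, rfl⟩)
    · exact el_mem_edgeSet hk1 (le_trans hk2 hj)
    · exact ep_mem_edgeSet hn (by omega) (by omega)
    · exact et_mem_edgeSet (by omega) hk2
  · intro v hv
    rcases mem_Vset hv with ⟨i, hi1, hi2, rfl⟩ | ⟨i, hi1, hi2, rfl⟩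
    · rcases le_or_gt i j with hle | hgt
      · refine ⟨el i, ⟨Or.inl ⟨i, hi1, hle, rfl⟩, by simp [el, Sym2.mem_iff]⟩, ?_⟩
        rintro e ⟨(⟨k, hk1, hk2, rfl⟩ | rfl | ⟨k, hk1, hk2, rfl⟩), hv⟩ <;>
          simp only [el, et, ep, Sym2.mem_iff, A_inj, A_ne_B, or_false, false_or] at hv
        · rw [hv]
        · omega
        · omega
      · rcases le_or_gt i (j+2) with hle2 | hgt2
        · refine ⟨ep (j+1), ⟨Or.inr (Or.inl rfl), by simp [ep, Sym2.mem_iff]; omega⟩, ?_⟩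
          rintro e ⟨(⟨k, hk1, hk2, rfl⟩ | rfl | ⟨k, hk1, hk2, rfl⟩), hv⟩ <;>
            simp only [el, et, ep, Sym2.mem_iff, A_inj, A_ne_B, or_false, false_or] at hv
          · omega
          · rfl
          · omega
        · refine ⟨et (i-2), ⟨Or.inr (Or.inr ⟨i-2, by omega, by omega, rfl⟩),
            by simp [et, Sym2.mem_iff]; omega⟩, ?_⟩
          rintro e ⟨(⟨k, hk1, hk2, rfl⟩ | rfl | ⟨k, hk1, hk2, rfl⟩), hv⟩ <;>
            simp only [el, et, ep, Sym2.mem_iff, A_inj, A_ne_B, or_false, false_or] at hv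
          · omega
          · omega
          · rw [show k = i - 2 by omega]
    · rcases le_or_gt i j with hle | hgt
      · refine ⟨el i, ⟨Or.inl ⟨i, hi1, hle, rfl⟩, by simp [el, Sym2.mem_iff]⟩, ?_⟩
        rintro e ⟨(⟨k, hk1, hk2, rfl⟩ | rfl | ⟨k, hk1, hk2, rfl⟩), hv⟩ <;>
          simp only [el, et, ep, Sym2.mem_iff, B_inj, B_ne_A, or_false, false_or] at hv
        · rw [hv]
        · omega
      · refine ⟨et i, ⟨Or.inr (Or.inr ⟨i, by omega, hi2, rfl⟩), by simp [et, Sym2.mem_iff]⟩, ?_⟩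
        rintro e ⟨(⟨k, hk1, hk2, rfl⟩ | rfl | ⟨k, hk1, hk2, rfl⟩), hv⟩ <;>
          simp only [el, et, ep, Sym2.mem_iff, B_inj, B_ne_A, or_false, false_or] at hv
        · omega
        · rw [hv]


lemma unique_cover {n : ℕ} {M : Set (Sym2 (ℤ×ℤ))} (hM : IsPerfectMatching n M)
    {v : ℤ×ℤ} (hv : v ∈ Vset n) {e f : Sym2 (ℤ×ℤ)} (he : e ∈ M) (hf : f ∈ M)
    (hve : v ∈ e) (hvf : v ∈ f) : e = f := by
  obtain ⟨g, -, hu⟩ := hM.2 v hv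
  rw [hu e ⟨he, hve⟩, hu f ⟨hf, hvf⟩]

lemma b_force {n : ℕ} {M : Set (Sym2 (ℤ×ℤ))} (hM : IsPerfectMatching n M)
    {i : ℕ} (h1 : 1 ≤ i) (h2 : i ≤ n) : el i ∈ M ∨ et i ∈ M := by
  obtain ⟨e, ⟨heM, hve⟩, -⟩ := hM.2 (B i) (B_mem_Vset h1 h2)
  rcases edge_shape (hM.1 heM) with ⟨k, hk1, hk2, rfl⟩ | ⟨k, hk1, hk2, rfl⟩ |
    ⟨k, hk1, hk2, rfl⟩ <;>
    simp only [el, et, ep, Sym2.mem_iff, B_inj, B_ne_A, or_false, false_or] at hve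
  · left; rw [hve]; exact heM
  · right; rw [hve]; exact heM

/-- The downward forcing cascade. -/
lemma cascade {n : ℕ} {M : Set (Sym2 (ℤ×ℤ))} (hM : IsPerfectMatching n M) (hn : 1 ≤ n) :
    ∀ i, i + 1 ≤ n → el (i+1) ∈ M → (∃ e ∈ M, A (i+2) ∈ e ∧ B i ∉ e) →
      ∀ k, 1 ≤ k → k ≤ i + 1 → el k ∈ M := by
  intro i
  induction i with
  | zero =>
    intro _ h2 _ k hk1 hk2
    have : k = 1 := by omega
    subst this; exact h2
  | succ m ih =>
    intro h1 h2 h3 k hk1 hk2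
    -- first, force el (m+1) ∈ M
    have hforce : el (m+1) ∈ M := by
      rcases b_force hM (by omega) (by omega : m + 1 ≤ n) with h | h
      · exact h
      · exfalso
        obtain ⟨e, heM, heA, heB⟩ := h3
        have : e = et (m+1) := by
          refine unique_cover hM (A_mem_Vset hn (by omega) (by omega : m + 3 ≤ n + 2))
            heM h heA ?_
          simp [et, Sym2.mem_iff]
        rw [this] at heB
        exact heB (by simp [et, Sym2.mem_iff])
    rcases le_or_gt k (m+1) with h | h
    · refine ih (by omega) hforce ⟨el (m+2), h2, ?_, ?_⟩ k hk1 h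
      · simp [el, Sym2.mem_iff]
      · simp [el, Sym2.mem_iff]
    · have : k = m + 2 := by omega
      subst this; exact h2

lemma eq_of_superset {n j : ℕ} {M : Set (Sym2 (ℤ×ℤ))} (hM : IsPerfectMatching n M)
    (hn : 1 ≤ n) (hj : j ≤ n) (hsub : Mset n j ⊆ M) : M = Mset n j := by
  ext e
  constructor
  · intro he
    -- find a vertex of e that lies in Vset n
    have hvex : ∃ v, v ∈ e ∧ v ∈ Vset n := by
      rcases edge_shape (hM.1 he) with ⟨k, hk1, hk2, rfl⟩ | ⟨k, hk1, hk2, rfl⟩ |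
        ⟨k, hk1, hk2, rfl⟩
      · exact ⟨A k, by simp [el, Sym2.mem_iff], A_mem_Vset hn hk1 (by omega)⟩
      · exact ⟨B k, by simp [et, Sym2.mem_iff], B_mem_Vset hk1 hk2⟩
      · exact ⟨A k, by simp [ep, Sym2.mem_iff], A_mem_Vset hn hk1 (by omega)⟩
    obtain ⟨v, hve, hvV⟩ := hvex
    obtain ⟨f, ⟨hfM, hvf⟩, -⟩ := (Mset_isPM hn hj).2 v hvV
    have : e = f := unique_cover hM hvV he (hsub hfM) hve hvf
    rw [this]; exact hfM
  · exact fun he => hsub he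

lemma complete {n : ℕ} {M : Set (Sym2 (ℤ×ℤ))} (hn : 1 ≤ n)
    (hM : IsPerfectMatching n M) : ∃ j, j ≤ n ∧ M = Mset n j := by
  classical
  by_cases hT : ∀ i, 1 ≤ i → i ≤ n → et i ∈ M
  · -- M = Mset n 0
    refine ⟨0, by omega, eq_of_superset hM hn (by omega) ?_⟩
    have hep1 : ep 1 ∈ M := by
      obtain ⟨e, ⟨heM, hve⟩, -⟩ := hM.2 (A 1) (A_mem_Vset hn le_rfl (by omega))
      rcases edge_shape (hM.1 heM) with ⟨k, hk1, hk2, rfl⟩ | ⟨k, hk1, hk2, rfl⟩ |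
        ⟨k, hk1, hk2, rfl⟩ <;>
        simp only [el, et, ep, Sym2.mem_iff, A_inj, A_ne_B, or_false, false_or] at hve
      · -- e = el k with 1 = k : contradiction with et 1 ∈ M at B 1
        exfalso
        have hk : k = 1 := by omega
        subst hk
        have h1 : et 1 ∈ M := hT 1 le_rfl hn
        have : el 1 = et 1 := by
          refine unique_cover hM (B_mem_Vset le_rfl hn) heM h1 ?_ ?_ <;>
            simp [el, et, Sym2.mem_iff]
        simp [el, et, Sym2.eq_iff] at this
        try omega
      · omega
      · rcases hve with h | h
        · have : k = 1 := by omega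
          subst this; exact heM
        · omega
    rintro e (⟨k, hk1, hk2, rfl⟩ | rfl | ⟨k, hk1, hk2, rfl⟩)
    · omega
    · exact hep1
    · exact hT k (by omega) hk2
  · push_neg at hT
    obtain ⟨j0, hj01, hj02, hj03⟩ := hT
    -- greatest bad index
    obtain ⟨j, hj1, hj2, hj3, hgt⟩ :
        ∃ j, 1 ≤ j ∧ j ≤ n ∧ et j ∉ M ∧ ∀ i, j < i → i ≤ n → et i ∈ M := by
      set P : ℕ → Prop := fun i => 1 ≤ i ∧ i ≤ n ∧ et i ∉ M with hP
      have hPdec : DecidablePred P := Classical.decPred P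
      have hPj : P (Nat.findGreatest P n) := Nat.findGreatest_spec (m := j0) hj02 ⟨hj01, hj02, hj03⟩
      refine ⟨Nat.findGreatest P n, hPj.1, hPj.2.1, hPj.2.2, ?_⟩
      intro i hi1 hi2
      by_contra hcon
      exact Nat.findGreatest_is_greatest hi1 hi2 ⟨by omega, hi2, hcon⟩
    have helj : el j ∈ M := by
      rcases b_force hM hj1 hj2 with h | h
      · exact h
      · exact absurd h hj3
    -- ep (j+1) ∈ M via the cover of A (j+2)
    have hep : ep (j+1) ∈ M := by
      obtain ⟨e, ⟨heM, hve⟩, -⟩ := hM.2 (A (j+2)) (A_mem_Vset hn (by omega) (by omega))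
      rcases edge_shape (hM.1 heM) with ⟨k, hk1, hk2, rfl⟩ | ⟨k, hk1, hk2, rfl⟩ |
        ⟨k, hk1, hk2, rfl⟩ <;>
        simp only [el, et, ep, Sym2.mem_iff, A_inj, A_ne_B, or_false, false_or] at hve
      · -- e = el (j+2) : conflict with et (j+2) ∈ M at B (j+2)
        exfalso
        have hk : k = j + 2 := by omega
        subst hk
        have h1 : et (j+2) ∈ M := hgt (j+2) (by omega) hk2
        have : el (j+2) = et (j+2) := by
          refine unique_cover hM (B_mem_Vset (by omega) hk2) heM h1 ?_ ?_ <;>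
            simp [el, et, Sym2.mem_iff]
        simp [el, et, Sym2.eq_iff] at this
        try omega
      · -- e = et k with j + 2 = k + 2, so k = j : contradiction
        exfalso
        have : k = j := by omega
        subst this
        exact hj3 heM
      · rcases hve with h | h
        · -- e = ep (j+2) : conflict with et (j+1) ∈ M at A (j+3)
          exfalso
          have hk : k = j + 2 := by omega
          subst hk
          -- j + 2 ≤ n + 1, so j + 1 ≤ n
          have h1 : et (j+1) ∈ M := hgt (j+1) (by omega) (by omega)
          have : ep (j+2) = et (j+1) := by
            refine unique_cover hM (A_mem_Vset hn (by omega) (by omega : j + 3 ≤ n + 2))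
              heM h1 ?_ ?_
            · simp [ep, Sym2.mem_iff]
            · simp [et, Sym2.mem_iff]
          simp [ep, et, Sym2.eq_iff] at this
          try omega
        · have : k = j + 1 := by omega
          subst this; exact heM
    -- all el k for k ≤ j
    have hels : ∀ k, 1 ≤ k → k ≤ j → el k ∈ M := by
      intro k hk1 hk2
      obtain ⟨m, rfl⟩ : ∃ m, j = m + 1 := ⟨j - 1, by omega⟩
      refine cascade hM hn m (by omega) helj ⟨ep (m+2), hep, ?_, ?_⟩ k hk1 hk2
      · simp [ep, Sym2.mem_iff]
      · simp [ep, Sym2.mem_iff]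
    refine ⟨j, hj2, eq_of_superset hM hn hj2 ?_⟩
    rintro e (⟨k, hk1, hk2, rfl⟩ | rfl | ⟨k, hk1, hk2, rfl⟩)
    · exact hels k hk1 hk2
    · exact hep
    · exact hgt k (by omega) hk2


lemma Mset_inj {n : ℕ} (j j' : ℕ) (hj : j ≤ n) (hj' : j' ≤ n)
    (h : Mset n j = Mset n j') : j = j' := by
  have h1 : ep (j+1) ∈ Mset n j' := h ▸ (Or.inr (Or.inl rfl))
  rcases h1 with ⟨k, hk1, hk2, heq⟩ | heq | ⟨k, hk1, hk2, heq⟩ <;>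
    simp [ep, el, et, Sym2.eq_iff] at heq <;> try omega

end Zigzag

/-- For every integer `n ≥ 1`, the zigzag snake graph `Z n` has exactly `n + 1`
perfect matchings. -/
theorem statement_0 (n : ℕ) (hn : 1 ≤ n) :
    {M : Set (Sym2 (ℤ × ℤ)) | Zigzag.IsPerfectMatching n M}.ncard = n + 1 := by
  have hset : {M : Set (Sym2 (ℤ × ℤ)) | Zigzag.IsPerfectMatching n M}
      = (fun j => Zigzag.Mset n j) '' Set.Icc 0 n := by
    ext M
    simp only [Set.mem_setOf_eq, Set.mem_image, Set.mem_Icc]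
    constructor
    · intro h
      obtain ⟨j, hj, hMe⟩ := Zigzag.complete hn h
      exact ⟨j, ⟨Nat.zero_le _, hj⟩, hMe.symm⟩
    · rintro ⟨j, ⟨-, hj⟩, rfl⟩
      exact Zigzag.Mset_isPM hn hj
  rw [hset]
  rw [Set.ncard_image_of_injOn (by
    intro a ha b hb hab
    exact Zigzag.Mset_inj a b ha.2 hb.2 hab)]
  rw [show (Set.Icc 0 n) = (↑(Finset.Icc 0 n) : Set ℕ) from (Finset.coe_Icc 0 n).symm,
    Set.ncard_coe_finset, Nat.card_Icc]
  omega
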